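/- arXiv:1903.09576 — 2 statements merged into one kernel-verified Lean document; each statement's English description precedes it below -/
import Mathlib

section
/- Let C_0 ∈ ℝ^{n×n} and C_e ∈ ℝ^{m×m} be symmetric positive definite, H ∈ ℝ^{m×n}, and let α_1, …, α_{N_a} > 0 satisfy Σ_{k=1}^{N_a} α_k^{−1} = 1. Define recursively C_k = C_{k−1} − C_{k−1} Hᵀ (H C_{k−1} Hᵀ + α_k C_e)^{−1} H C_{k−1} for k = 1, …, N_a. Then each C_k is symmetric positive definite and C_{N_a} = (C_0^{−1} + Hᵀ C_e^{−1} H)^{−1} = C_0 − C_0 Hᵀ (H C_0 Hᵀ + C_e)^{−1} H C_0; that is, N_a multiple-data-assimilation covariance updates with inflation coefficients α_k summing inversely to one yield exactly the covariance of a single Kalman (Bayesian linear-Gaussian) update with the uninflated data-error covariance C_e. -/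
open Matrix

variable {n m : ℕ}

lemma myPosDef_add_posSemidef {A B : Matrix (Fin n) (Fin n) ℝ}
    (hA : A.PosDef) (hB : B.PosSemidef) : (A + B).PosDef :=
  ⟨hA.1.add hB.1, fun x hx => by
    simpa [mul_add,add_mul] using add_pos_of_pos_of_nonneg (hA.2 (x := x) hx) (hB.2 x)⟩

lemma myPosDef_smul {A : Matrix (Fin m) (Fin m) ℝ} (hA : A.PosDef) {c : ℝ} (hc : 0 < c) :
    (c • A).PosDef := by
  refine ⟨?_, fun x hx => ?_⟩
  · simp [Matrix.IsHermitian, conjTranspose_smul, hA.1.eq, show Aᵀ = A from hA.1.eq]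
  · simpa [Finsupp.mul_sum, mul_left_comm, mul_assoc] using mul_pos hc (hA.2 hx)

lemma my_semidef_HCHt {C : Matrix (Fin n) (Fin n) ℝ} (hC : C.PosSemidef)
    (H : Matrix (Fin m) (Fin n) ℝ) : (H * C * Hᵀ).PosSemidef := by
  have := hC.mul_mul_conjTranspose_same H
  simpa using this

lemma my_semidef_HtRH {R : Matrix (Fin m) (Fin m) ℝ} (hR : R.PosSemidef)
    (H : Matrix (Fin m) (Fin n) ℝ) : (Hᵀ * R * H).PosSemidef := by
  have := hR.conjTranspose_mul_mul_same H
  simpa using this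

lemma kalman_step {C : Matrix (Fin n) (Fin n) ℝ} (hC : C.PosDef)
    {R : Matrix (Fin m) (Fin m) ℝ} (hR : R.PosDef) (H : Matrix (Fin m) (Fin n) ℝ) :
    C - C * Hᵀ * (H * C * Hᵀ + R)⁻¹ * H * C = (C⁻¹ + Hᵀ * R⁻¹ * H)⁻¹ := by
  set S := H * C * Hᵀ + R with hSdef
  have hS : S.PosDef := by
    rw [hSdef, add_comm]
    exact myPosDef_add_posSemidef hR (my_semidef_HCHt hC.posSemidef H)
  have hSd : IsUnit S.det := hS.det_pos.ne'.isUnit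
  have hCd : IsUnit C.det := hC.det_pos.ne'.isUnit
  have hRd : IsUnit R.det := hR.det_pos.ne'.isUnit
  have hCC : C * C⁻¹ = 1 := Matrix.mul_nonsing_inv _ hCd
  have hRR : R * R⁻¹ = 1 := Matrix.mul_nonsing_inv _ hRd
  have hSS : S⁻¹ * S = 1 := Matrix.nonsing_inv_mul _ hSd
  -- key : S⁻¹ * (H*C*Hᵀ) * R⁻¹ = R⁻¹ - S⁻¹
  have key : S⁻¹ * (H * C * Hᵀ) * R⁻¹ = R⁻¹ - S⁻¹ := by
    have h1 : S⁻¹ * (H * C * Hᵀ) + S⁻¹ * R = 1 := by rw [← mul_add, ← hSdef, hSS]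
    have h2 : (S⁻¹ * (H * C * Hᵀ)) * R⁻¹ + (S⁻¹ * R) * R⁻¹ = R⁻¹ := by
      rw [← add_mul, h1, one_mul]
    rw [mul_assoc (S⁻¹) R R⁻¹, hRR, mul_one] at h2
    rw [eq_sub_iff_add_eq]; exact h2
  have main : (C - C * Hᵀ * S⁻¹ * H * C) * (C⁻¹ + Hᵀ * R⁻¹ * H) = 1 := by
    have expand : (C - C * Hᵀ * S⁻¹ * H * C) * (C⁻¹ + Hᵀ * R⁻¹ * H) =
        C * C⁻¹ + C * Hᵀ * R⁻¹ * H
          - C * Hᵀ * S⁻¹ * H * (C * C⁻¹)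
          - C * Hᵀ * (S⁻¹ * (H * C * Hᵀ) * R⁻¹) * H := by
      simp only [Matrix.sub_mul, Matrix.mul_add, Matrix.add_mul, Matrix.mul_sub,
        Matrix.mul_assoc]
      abel
    rw [expand, hCC, key, Matrix.mul_sub, Matrix.sub_mul, mul_one]
    abel
  exact (Matrix.inv_eq_left_inv main).symm

lemma myPosSemidef_smul {A : Matrix (Fin n) (Fin n) ℝ} (hA : A.PosSemidef) {c : ℝ}
    (hc : 0 ≤ c) : (c • A).PosSemidef := by
  refine ⟨?_, fun x => ?_⟩
  · simp [Matrix.IsHermitian, conjTranspose_smul, hA.1.eq, show Aᵀ = A from hA.1.eq]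
  · simpa [Finsupp.mul_sum, mul_left_comm, mul_assoc] using mul_nonneg hc (hA.2 x)

/-- `N_a` ES-MDA covariance updates with inflation coefficients `α_k` satisfying
`∑ α_k⁻¹ = 1` keep the covariance symmetric positive definite and reproduce exactly
the single Kalman (linear-Gaussian Bayesian) covariance update with the uninflated `C_e`. -/
theorem esmda_covariance_equals_single_update {n m Na : ℕ}
    (Ce : Matrix (Fin m) (Fin m) ℝ) (hCe : Ce.PosDef)
    (H : Matrix (Fin m) (Fin n) ℝ)
    (α : Fin Na → ℝ) (hα : ∀ k, 0 < α k) (hsum : ∑ k, (α k)⁻¹ = 1)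
    (C : ℕ → Matrix (Fin n) (Fin n) ℝ) (hC0 : (C 0).PosDef)
    (hrec : ∀ k : Fin Na,
      C ((k : ℕ) + 1) = C (k : ℕ) -
        C (k : ℕ) * Hᵀ * (H * C (k : ℕ) * Hᵀ + α k • Ce)⁻¹ * H * C (k : ℕ)) :
    (∀ k ≤ Na, (C k).PosDef) ∧
    C Na = ((C 0)⁻¹ + Hᵀ * Ce⁻¹ * H)⁻¹ ∧
    C Na = C 0 - C 0 * Hᵀ * (H * C 0 * Hᵀ + Ce)⁻¹ * H * C 0 := by
  set M : Matrix (Fin n) (Fin n) ℝ := Hᵀ * Ce⁻¹ * H with hMdef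
  have hM : M.PosSemidef := my_semidef_HtRH hCe.inv.posSemidef H
  set s : ℕ → ℝ := fun k => ∑ j : Fin Na, if (j : ℕ) < k then (α j)⁻¹ else 0 with hsdef
  have hs0 : ∀ k, 0 ≤ s k := fun k =>
    Finset.sum_nonneg fun j _ => by split_ifs; exacts [(inv_pos.mpr (hα j)).le, le_rfl]
  have hX : ∀ k, ((C 0)⁻¹ + s k • M).PosDef := fun k =>
    myPosDef_add_posSemidef hC0.inv (myPosSemidef_smul hM (hs0 k))
  -- inverse of a scalar multiple of Ce
  have hsmulinv : ∀ k : Fin Na, (α k • Ce)⁻¹ = (α k)⁻¹ • Ce⁻¹ := by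
    intro k
    refine Matrix.inv_eq_right_inv ?_
    rw [Matrix.smul_mul, Matrix.mul_smul, smul_smul, mul_inv_cancel₀ (hα k).ne',
      Matrix.mul_nonsing_inv _ hCe.det_pos.ne'.isUnit, one_smul]
  -- main induction
  have key : ∀ k ≤ Na, C k = ((C 0)⁻¹ + s k • M)⁻¹ := by
    intro k hk
    induction k with
    | zero =>
        have : s 0 = 0 := by simp [hsdef]
        rw [this, zero_smul, add_zero,
          Matrix.nonsing_inv_nonsing_inv _ hC0.det_pos.ne'.isUnit]
    | succ k ih =>
        have hkNa : k < Na := hk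
        have hCk : C k = ((C 0)⁻¹ + s k • M)⁻¹ := ih (le_of_lt hkNa)
        have hCkpos : (C k).PosDef := hCk ▸ (hX k).inv
        have hCkinv : (C k)⁻¹ = (C 0)⁻¹ + s k • M := by
          rw [hCk, Matrix.nonsing_inv_nonsing_inv _ (hX k).det_pos.ne'.isUnit]
        have hR : (α ⟨k, hkNa⟩ • Ce).PosDef := myPosDef_smul hCe (hα _)
        have step := kalman_step hCkpos hR H
        have hrk := hrec ⟨k, hkNa⟩
        simp only at hrk
        rw [hrk, step, hsmulinv, hCkinv]
        have hss : s (k + 1) = s k + (α ⟨k, hkNa⟩)⁻¹ := by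
          have hpt : ∀ j : Fin Na, (if (j : ℕ) < k + 1 then (α j)⁻¹ else 0) =
              (if (j : ℕ) < k then (α j)⁻¹ else 0) +
              (if j = ⟨k, hkNa⟩ then (α j)⁻¹ else 0) := by
            intro j
            split_ifs <;> simp_all [Fin.ext_iff] <;> omega
          simp only [hsdef]
          rw [Finset.sum_congr rfl fun j _ => hpt j, Finset.sum_add_distrib,
            Finset.sum_ite_eq' Finset.univ ⟨k, hkNa⟩ fun j => (α j)⁻¹]
          simp
        rw [hss, add_smul]
        congr 1
        rw [Matrix.mul_smul, Matrix.smul_mul, add_assoc]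
  have hsNa : s Na = 1 := by
    simp only [hsdef]
    rw [← hsum]
    exact Finset.sum_congr rfl fun j _ => by simp [j.isLt]
  have hfin : C Na = ((C 0)⁻¹ + M)⁻¹ := by
    rw [key Na le_rfl, hsNa, one_smul]
  refine ⟨fun k hk => (key k hk) ▸ (hX k).inv, hfin, ?_⟩
  rw [hfin, ← kalman_step hC0 hCe H]
end

section
/- Let C_0 ∈ ℝ^{n×n} and C_e ∈ ℝ^{m×m} be symmetric positive definite, H ∈ ℝ^{m×n}, d ∈ ℝ^m, m_0 ∈ ℝ^n, and let α_1, …, α_{N_a} > 0 satisfy Σ_{k=1}^{N_a} α_k^{−1} = 1. Define recursively, for k = 1, …, N_a: K_k = C_{k−1} Hᵀ (H C_{k−1} Hᵀ + α_k C_e)^{−1}, m_k = m_{k−1} + K_k (d − H m_{k−1}), and C_k = C_{k−1} − K_k H C_{k−1}. Then m_{N_a} = m_0 + C_0 Hᵀ (H C_0 Hᵀ + C_e)^{−1} (d − H m_0) = (C_0^{−1} + Hᵀ C_e^{−1} H)^{−1} (C_0^{−1} m_0 + Hᵀ C_e^{−1} d); that is, the N_a multiple-data-assimilation mean updates with inflation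 coefficients α_k summing inversely to one reproduce exactly the posterior mean of a single linear-Gaussian Bayesian update with data d and data-error covariance C_e. -/
open Matrix

variable {n m : ℕ}

lemma posdef_smul' {M : Matrix (Fin n) (Fin n) ℝ} (hM : M.PosDef) {c : ℝ} (hc : 0 < c) :
    (c • M).PosDef := by
  refine ⟨?_, fun x hx => ?_⟩
  · have h : Mᵀ = M := by simpa using hM.1.eq
    simp [Matrix.IsHermitian, h]
  · exact (hM.smul hc).2 hx

lemma possemidef_smul' {M : Matrix (Fin n) (Fin n) ℝ} (hM : M.PosSemidef) {c : ℝ} (hc : 0 ≤ c) :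
    (c • M).PosSemidef := by
  refine ⟨?_, fun x => ?_⟩
  · have h : Mᵀ = M := by simpa using hM.1.eq
    simp [Matrix.IsHermitian, h]
  · exact (hM.smul hc).2 x

lemma possemidef_conj {M : Matrix (Fin m) (Fin m) ℝ} (hM : M.PosSemidef)
    (H : Matrix (Fin m) (Fin n) ℝ) : (Hᵀ * M * H).PosSemidef := by
  have := hM.conjTranspose_mul_mul_same H
  simpa [conjTranspose_eq_transpose_of_trivial] using this

lemma possemidef_conj' {M : Matrix (Fin n) (Fin n) ℝ} (hM : M.PosSemidef)
    (H : Matrix (Fin m) (Fin n) ℝ) : (H * M * Hᵀ).PosSemidef := by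
  have := hM.mul_mul_conjTranspose_same H
  simpa [conjTranspose_eq_transpose_of_trivial] using this

lemma esmda_step (Ce : Matrix (Fin m) (Fin m) ℝ) (hCe : Ce.PosDef)
    (H : Matrix (Fin m) (Fin n) ℝ) (C : Matrix (Fin n) (Fin n) ℝ) (hC : C.PosDef)
    {a : ℝ} (ha : 0 < a) (d : Fin m → ℝ) (μ : Fin n → ℝ) :
    C - (C * Hᵀ * (H * C * Hᵀ + a • Ce)⁻¹) * H * C
      = (C⁻¹ + a⁻¹ • (Hᵀ * Ce⁻¹ * H))⁻¹ ∧
    μ + (C * Hᵀ * (H * C * Hᵀ + a • Ce)⁻¹).mulVec (d - H.mulVec μ)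
      = ((C⁻¹ + a⁻¹ • (Hᵀ * Ce⁻¹ * H))⁻¹).mulVec
          (C⁻¹.mulVec μ + a⁻¹ • (Hᵀ * Ce⁻¹).mulVec d) := by
  have hCedet : IsUnit Ce.det := hCe.det_pos.ne'.isUnit
  have hCdet : IsUnit C.det := hC.det_pos.ne'.isUnit
  set R : Matrix (Fin m) (Fin m) ℝ := a • Ce with hRdef
  have hR : R.PosDef := posdef_smul' hCe ha
  have hRdet : IsUnit R.det := hR.det_pos.ne'.isUnit
  have hRinv : R⁻¹ = a⁻¹ • Ce⁻¹ := by
    apply Matrix.inv_eq_right_inv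
    rw [hRdef, smul_mul_smul_comm, Matrix.mul_nonsing_inv _ hCedet,
      mul_inv_cancel₀ ha.ne', one_smul]
  set S : Matrix (Fin m) (Fin m) ℝ := H * C * Hᵀ + R with hSdef
  have hS : S.PosDef := Matrix.PosDef.posSemidef_add (possemidef_conj' hC.posSemidef H) hR
  have hSdet : IsUnit S.det := hS.det_pos.ne'.isUnit
  set P : Matrix (Fin n) (Fin n) ℝ := C⁻¹ + Hᵀ * R⁻¹ * H with hPdef
  have hPalt : C⁻¹ + a⁻¹ • (Hᵀ * Ce⁻¹ * H) = P := by
    rw [hPdef, hRinv, Matrix.mul_smul, Matrix.smul_mul]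
  have hP : P.PosDef := hC.inv.add_posSemidef (possemidef_conj hR.inv.posSemidef H)
  have hPdet : IsUnit P.det := hP.det_pos.ne'.isUnit
  set K : Matrix (Fin n) (Fin m) ℝ := C * Hᵀ * S⁻¹ with hKdef
  have h1 : P * (C * Hᵀ) = Hᵀ * R⁻¹ * S := by
    rw [hPdef, hSdef, Matrix.add_mul, Matrix.mul_add]
    simp only [Matrix.mul_assoc, Matrix.nonsing_inv_mul_cancel_left _ _ hCdet,
      Matrix.nonsing_inv_mul _ hRdet, Matrix.mul_one]
    exact add_comm _ _
  have hPK : P * K = Hᵀ * R⁻¹ := by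
    rw [hKdef, ← Matrix.mul_assoc, h1, Matrix.mul_nonsing_inv_cancel_right _ _ hSdet]
  have hKeq : K = P⁻¹ * (Hᵀ * R⁻¹) := by
    rw [← hPK, Matrix.nonsing_inv_mul_cancel_left _ _ hPdet]
  have hXeq : C - K * H * C = P⁻¹ := by
    symm; apply Matrix.inv_eq_right_inv
    rw [Matrix.mul_sub]
    have hPC : P * C = 1 + Hᵀ * R⁻¹ * H * C := by
      rw [hPdef, Matrix.add_mul, Matrix.nonsing_inv_mul _ hCdet]
    have hPKHC : P * (K * H * C) = Hᵀ * R⁻¹ * H * C := by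
      rw [show K * H * C = K * (H * C) from by rw [Matrix.mul_assoc],
        ← Matrix.mul_assoc, hPK]
      simp [Matrix.mul_assoc]
    rw [hPC, hPKHC, add_sub_cancel_right]
  have hP1 : P⁻¹ * C⁻¹ = 1 - K * H := by
    have hc : C⁻¹ = P - Hᵀ * R⁻¹ * H := by rw [hPdef, add_sub_cancel_right]
    rw [hc, Matrix.mul_sub, Matrix.nonsing_inv_mul _ hPdet, hKeq]
    simp [Matrix.mul_assoc]
  constructor
  · rw [hXeq, hPalt]
  · have hq : a⁻¹ • (Hᵀ * Ce⁻¹).mulVec d = (Hᵀ * R⁻¹).mulVec d := by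
      rw [hRinv, Matrix.mul_smul, smul_mulVec]
    rw [hPalt, hq]
    rw [mulVec_add, mulVec_mulVec, mulVec_mulVec, hP1, ← hKeq]
    rw [mulVec_sub, mulVec_mulVec, sub_mulVec, one_mulVec]
    abel

/-- `N_a` ES-MDA mean updates with inflation coefficients `α_k` satisfying `∑ α_k⁻¹ = 1`,
assimilating the same data `d` each time, reproduce exactly the posterior mean of a single
linear-Gaussian Bayesian update with data-error covariance `C_e`, in both the gain form and
the information form. -/
theorem esmda_mean_equals_single_update {n m Na : ℕ}
    (Ce : Matrix (Fin m) (Fin m) ℝ) (hCe : Ce.PosDef)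
    (H : Matrix (Fin m) (Fin n) ℝ) (d : Fin m → ℝ)
    (α : Fin Na → ℝ) (hα : ∀ k, 0 < α k) (hsum : ∑ k, (α k)⁻¹ = 1)
    (C : ℕ → Matrix (Fin n) (Fin n) ℝ) (μ : ℕ → Fin n → ℝ)
    (hC0 : (C 0).PosDef)
    (hrecμ : ∀ k : Fin Na,
      μ ((k : ℕ) + 1) = μ (k : ℕ) +
        (C (k : ℕ) * Hᵀ * (H * C (k : ℕ) * Hᵀ + α k • Ce)⁻¹).mulVec
          (d - H.mulVec (μ (k : ℕ))))
    (hrecC : ∀ k : Fin Na,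
      C ((k : ℕ) + 1) = C (k : ℕ) -
        (C (k : ℕ) * Hᵀ * (H * C (k : ℕ) * Hᵀ + α k • Ce)⁻¹) * H * C (k : ℕ)) :
    μ Na = μ 0 + (C 0 * Hᵀ * (H * C 0 * Hᵀ + Ce)⁻¹).mulVec (d - H.mulVec (μ 0)) ∧
    μ Na = (((C 0)⁻¹ + Hᵀ * Ce⁻¹ * H)⁻¹).mulVec
        ((C 0)⁻¹.mulVec (μ 0) + (Hᵀ * Ce⁻¹).mulVec d) := by
  have hC0det : IsUnit (C 0).det := hC0.det_pos.ne'.isUnit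
  set M : Matrix (Fin n) (Fin n) ℝ := Hᵀ * Ce⁻¹ * H with hMdef
  have hM : M.PosSemidef := possemidef_conj hCe.inv.posSemidef H
  set q : Fin n → ℝ := (Hᵀ * Ce⁻¹).mulVec d with hqdef
  set β : ℕ → ℝ := fun j => if h : j < Na then (α ⟨j, h⟩)⁻¹ else 0 with hβdef
  have hβnn : ∀ j, 0 ≤ β j := by
    intro j; rw [hβdef]; dsimp only
    split
    · exact (inv_pos.mpr (hα _)).le
    · exact le_rfl
  set s : ℕ → ℝ := fun k => ∑ j ∈ Finset.range k, β j with hsdef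
  have hsnn : ∀ k, 0 ≤ s k := fun k => Finset.sum_nonneg fun j _ => hβnn j
  have hsNa : s Na = 1 := by
    rw [hsdef]; dsimp only
    rw [← Fin.sum_univ_eq_sum_range β Na, ← hsum]
    refine Finset.sum_congr rfl fun k _ => ?_
    rw [hβdef]; dsimp only
    rw [dif_pos k.2]
  -- the invariant
  have key : ∀ k, k ≤ Na →
      C k = ((C 0)⁻¹ + s k • M)⁻¹ ∧
      μ k = (C k).mulVec (((C 0)⁻¹).mulVec (μ 0) + s k • q) := by
    intro k
    induction k with
    | zero =>
      intro _
      have hs0 : s 0 = 0 := by simp [hsdef]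
      constructor
      · rw [hs0, zero_smul, add_zero, Matrix.nonsing_inv_nonsing_inv _ hC0det]
      · rw [hs0, zero_smul, add_zero, mulVec_mulVec,
          Matrix.mul_nonsing_inv _ hC0det, one_mulVec]
    | succ k ih =>
      intro hk1
      have hk : k < Na := hk1
      obtain ⟨hCk, hμk⟩ := ih (Nat.le_of_succ_le hk1)
      have hPk : ((C 0)⁻¹ + s k • M).PosDef :=
        hC0.inv.add_posSemidef (possemidef_smul' hM (hsnn k))
      have hPkdet : IsUnit ((C 0)⁻¹ + s k • M).det := hPk.det_pos.ne'.isUnit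
      have hCkpos : (C k).PosDef := by rw [hCk]; exact hPk.inv
      have hCkinv : (C k)⁻¹ = (C 0)⁻¹ + s k • M := by
        rw [hCk, Matrix.nonsing_inv_nonsing_inv _ hPkdet]
      obtain ⟨h1, h2⟩ := esmda_step Ce hCe H (C k) hCkpos (hα ⟨k, hk⟩) d (μ k)
      have hss : s (k + 1) = s k + (α ⟨k, hk⟩)⁻¹ := by
        rw [hsdef]; dsimp only
        rw [Finset.sum_range_succ, hβdef]; dsimp only
        rw [dif_pos hk]
      have hCk1 : C (k + 1) = ((C 0)⁻¹ + s (k + 1) • M)⁻¹ := by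
        rw [hrecC ⟨k, hk⟩, h1, hCkinv, hss, add_smul, add_assoc]
      refine ⟨hCk1, ?_⟩
      rw [hrecμ ⟨k, hk⟩, h2, hCkinv]
      have hv : ((C 0)⁻¹ + s k • M) *ᵥ μ k = (C 0)⁻¹ *ᵥ μ 0 + s k • q := by
        rw [← hCkinv, hμk, mulVec_mulVec,
          Matrix.nonsing_inv_mul _ hCkpos.det_pos.ne'.isUnit, one_mulVec]
      rw [← hMdef, ← hqdef, hv, hCk1, hss, add_smul, add_assoc, add_assoc, add_smul]
  obtain ⟨hCN, hμN⟩ := key Na le_rfl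
  rw [hsNa, one_smul] at hCN hμN
  constructor
  · obtain ⟨h1, h2⟩ := esmda_step Ce hCe H (C 0) hC0 one_pos d (μ 0)
    rw [← hMdef, ← hqdef] at h2
    simp only [one_smul, inv_one] at h2
    rw [hμN, hCN]
    exact h2.symm
  · rw [hμN, hCN, hMdef, hqdef]
end
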